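/- Let d and t be positive integers, let x_1,…,x_n be unit vectors in ℂ^d, and let w_1,…,w_n be positive real weights with ∑_{i=1}^n w_i = 1. Then ∑_{i=1}^n ∑_{j=1}^n w_i w_j |⟨x_i, x_j⟩|^{2t} ≥ 1/C(d+t−1, t), where C(d+t−1,t) is the binomial coefficient and ⟨·,·⟩ is the standard Hermitian inner product on ℂ^d. (Generalized Welch bound.) -/

import Mathlib

open Finset ComplexConjugate

private lemma welch_card_le (d t : ℕ) (hd : 0 < d) :
    ((Finset.univ : Finset (Fin d)).piAntidiag t).card ≤ (d + t - 1).choose t := by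
  classical
  set S := (Finset.univ : Finset (Fin d)).piAntidiag t with hSdef
  have hmap : ∀ f ∈ S, Multiset.card (Finsupp.toMultiset (Finsupp.equivFunOnFinite.symm f)) = t := by
    intro f hf
    rw [hSdef, Finset.mem_piAntidiag] at hf
    rw [Finsupp.card_toMultiset, Finsupp.sum_fintype]
    · simpa using hf.1
    · intro; rfl
  let F : (Fin d → ℕ) → Sym (Fin d) t := fun f =>
    if h : Multiset.card (Finsupp.toMultiset (Finsupp.equivFunOnFinite.symm f)) = t
    then ⟨_, h⟩ else Sym.replicate t ⟨0, hd⟩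
  have hle : S.card ≤ Fintype.card (Sym (Fin d) t) := by
    have h := Finset.card_le_card_of_injOn (s := S) (t := (Finset.univ : Finset (Sym (Fin d) t))) F (fun f _ => Finset.mem_univ _) ?_
    · simpa using h
    · intro f hf g hg hfg
      simp only [F, dif_pos (hmap f hf), dif_pos (hmap g hg)] at hfg
      have hmul : Finsupp.toMultiset (Finsupp.equivFunOnFinite.symm f)
          = Finsupp.toMultiset (Finsupp.equivFunOnFinite.symm g) := by
          simpa [hmap f hf, hmap g hg] using congrArg Subtype.val hfg
      funext a
      have := congrArg (fun m => Multiset.count a m) hmul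
      simpa [Finsupp.count_toMultiset] using this
  calc S.card ≤ Fintype.card (Sym (Fin d) t) := hle
    _ = (d + t - 1).choose t := by
        rw [Sym.card_sym_eq_multichoose, Fintype.card_fin, Nat.multichoose_eq]

/-- **Generalized Welch bound.** For unit vectors `x 1, …, x n` in `ℂ^d` and positive
weights summing to 1, `∑ i j, w i * w j * |⟨x i, x j⟩|^(2t) ≥ 1 / C(d+t-1, t)`. -/
theorem welch_bound (d t n : ℕ) (hd : 0 < d) (ht : 0 < t)
    (x : Fin n → EuclideanSpace ℂ (Fin d)) (hx : ∀ i, ‖x i‖ = 1)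
    (w : Fin n → ℝ) (hw : ∀ i, 0 < w i) (hsum : ∑ i, w i = 1) :
    ((d + t - 1).choose t : ℝ)⁻¹ ≤
      ∑ i, ∑ j, w i * w j * ‖(inner ℂ (x i) (x j) : ℂ)‖ ^ (2 * t) := by
  classical
  set S : Finset (Fin d → ℕ) := (Finset.univ : Finset (Fin d)).piAntidiag t with hSdef
  set φ : Fin n → (Fin d → ℕ) → ℂ :=
    fun i a => ((Real.sqrt (Nat.multinomial Finset.univ a) : ℝ) : ℂ) * ∏ k, x i k ^ a k with hφ
  -- the kernel identity
  have key1 : ∀ i j, ∑ a ∈ S, conj (φ i a) * φ j a = (inner ℂ (x i) (x j) : ℂ) ^ t := by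
    intro i j
    have hinner : (inner ℂ (x i) (x j) : ℂ) = ∑ k, conj (x i k) * x j k := by
      simp [PiLp.inner_apply, RCLike.inner_apply, mul_comm]
    rw [hinner, Finset.sum_pow_eq_sum_piAntidiag]
    refine Finset.sum_congr rfl fun a _ => ?_
    have hconj : conj (φ i a)
        = ((Real.sqrt (Nat.multinomial Finset.univ a) : ℝ) : ℂ) * ∏ k, conj (x i k) ^ a k := by
      simp [hφ, map_prod]
    rw [hconj, hφ]
    rw [mul_mul_mul_comm, ← Complex.ofReal_mul,
      Real.mul_self_sqrt (Nat.cast_nonneg _), ← Finset.prod_mul_distrib]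
    simp [mul_pow]
  have key2 : ∀ i, (inner ℂ (x i) (x i) : ℂ) ^ t = 1 := by
    intro i
    rw [inner_self_eq_norm_sq_to_K, hx i]
    norm_num
  -- the Gram-type matrix
  set B : (Fin d → ℕ) → (Fin d → ℕ) → ℂ :=
    fun a b => ∑ i, (w i : ℂ) * (conj (φ i a) * φ i b) with hB
  -- trace is 1
  have trace : ∑ a ∈ S, B a a = 1 := by
    rw [hB]
    rw [Finset.sum_comm]
    have h1 : ∀ i : Fin n, ∑ a ∈ S, (w i : ℂ) * (conj (φ i a) * φ i a) = (w i : ℂ) := by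
      intro i
      rw [← Finset.mul_sum, key1 i i, key2 i, mul_one]
    rw [Finset.sum_congr rfl fun i _ => h1 i]
    rw [← Complex.ofReal_sum, hsum, Complex.ofReal_one]
  -- expansion of the double sum
  have key3 : ∑ a ∈ S, ∑ b ∈ S, B a b * conj (B a b)
      = ∑ i, ∑ j, ((w i : ℂ) * (w j : ℂ)) *
          ((inner ℂ (x i) (x j) : ℂ) ^ t * conj ((inner ℂ (x i) (x j) : ℂ) ^ t)) := by
    have hconjB : ∀ a b, conj (B a b) = ∑ j, (w j : ℂ) * (φ j a * conj (φ j b)) := by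
      intro a b
      rw [hB]
      rw [map_sum]
      refine Finset.sum_congr rfl fun j _ => ?_
      simp [mul_comm]
    have expand : ∀ a b : Fin d → ℕ, B a b * conj (B a b)
        = ∑ q : Fin n × Fin n, ((w q.1 : ℂ) * (w q.2 : ℂ)) *
            ((conj (φ q.1 a) * φ q.2 a) * (φ q.1 b * conj (φ q.2 b))) := by
      intro a b
      rw [hconjB, hB, Finset.sum_mul_sum, Fintype.sum_prod_type]
      refine Finset.sum_congr rfl fun i _ => Finset.sum_congr rfl fun j _ => ?_
      ring
    calc ∑ a ∈ S, ∑ b ∈ S, B a b * conj (B a b)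
        = ∑ p ∈ S ×ˢ S, ∑ q : Fin n × Fin n, ((w q.1 : ℂ) * (w q.2 : ℂ)) *
            ((conj (φ q.1 p.1) * φ q.2 p.1) * (φ q.1 p.2 * conj (φ q.2 p.2))) := by
          rw [Finset.sum_product]
          exact Finset.sum_congr rfl fun a _ => Finset.sum_congr rfl fun b _ => expand a b
      _ = ∑ q : Fin n × Fin n, ∑ p ∈ S ×ˢ S, ((w q.1 : ℂ) * (w q.2 : ℂ)) *
            ((conj (φ q.1 p.1) * φ q.2 p.1) * (φ q.1 p.2 * conj (φ q.2 p.2))) :=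
          Finset.sum_comm
      _ = ∑ i, ∑ j, ((w i : ℂ) * (w j : ℂ)) *
          ((inner ℂ (x i) (x j) : ℂ) ^ t * conj ((inner ℂ (x i) (x j) : ℂ) ^ t)) := by
          rw [Fintype.sum_prod_type]
          refine Finset.sum_congr rfl fun i _ => Finset.sum_congr rfl fun j _ => ?_
          rw [Finset.sum_product]
          have hd' : ∑ b ∈ S, φ i b * conj (φ j b) = conj ((inner ℂ (x i) (x j) : ℂ) ^ t) := by
            rw [← key1 i j, map_sum]
            refine Finset.sum_congr rfl fun b _ => ?_
            simp [mul_comm]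
          calc ∑ a ∈ S, ∑ b ∈ S, ((w i : ℂ) * (w j : ℂ)) *
                ((conj (φ i a) * φ j a) * (φ i b * conj (φ j b)))
              = ((w i : ℂ) * (w j : ℂ)) * ∑ a ∈ S, ∑ b ∈ S,
                (conj (φ i a) * φ j a) * (φ i b * conj (φ j b)) := by
                simp only [Finset.mul_sum]
            _ = ((w i : ℂ) * (w j : ℂ)) * ((∑ a ∈ S, conj (φ i a) * φ j a) *
                (∑ b ∈ S, φ i b * conj (φ j b))) := by rw [Finset.sum_mul_sum]
            _ = ((w i : ℂ) * (w j : ℂ)) *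
                ((inner ℂ (x i) (x j) : ℂ) ^ t * conj ((inner ℂ (x i) (x j) : ℂ) ^ t)) := by
                rw [key1 i j, hd']
  -- pass to real numbers
  have hRHS : ∑ i, ∑ j, w i * w j * ‖(inner ℂ (x i) (x j) : ℂ)‖ ^ (2 * t)
      = ∑ a ∈ S, ∑ b ∈ S, ‖B a b‖ ^ 2 := by
    have hC : ((∑ i, ∑ j, w i * w j * ‖(inner ℂ (x i) (x j) : ℂ)‖ ^ (2 * t) : ℝ) : ℂ)
        = ∑ a ∈ S, ∑ b ∈ S, ((‖B a b‖ ^ 2 : ℝ) : ℂ) := by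
      have hzz : ∀ z : ℂ, z * conj z = ((‖z‖ ^ 2 : ℝ) : ℂ) := fun z => by
        rw [Complex.mul_conj, Complex.normSq_eq_norm_sq]
      calc ((∑ i, ∑ j, w i * w j * ‖(inner ℂ (x i) (x j) : ℂ)‖ ^ (2 * t) : ℝ) : ℂ)
          = ∑ i, ∑ j, ((w i : ℂ) * (w j : ℂ)) *
              ((inner ℂ (x i) (x j) : ℂ) ^ t * conj ((inner ℂ (x i) (x j) : ℂ) ^ t)) := by
            push_cast
            refine Finset.sum_congr rfl fun i _ => Finset.sum_congr rfl fun j _ => ?_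
            rw [hzz, norm_pow]
            push_cast
            rw [← pow_mul, mul_comm t 2]
        _ = ∑ a ∈ S, ∑ b ∈ S, B a b * conj (B a b) := key3.symm
        _ = ∑ a ∈ S, ∑ b ∈ S, ((‖B a b‖ ^ 2 : ℝ) : ℂ) := by
            refine Finset.sum_congr rfl fun a _ => Finset.sum_congr rfl fun b _ => ?_
            rw [hzz]
    exact_mod_cast hC
  -- diagonal real parts
  have hdiag : ∑ a ∈ S, (B a a).re = 1 := by
    have h := congrArg Complex.re trace
    rw [Complex.re_sum] at h
    simpa using h
  have hcard_pos : 0 < S.card := by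
    rcases S.eq_empty_or_nonempty with h | h
    · rw [h] at hdiag; simp at hdiag
    · exact Finset.card_pos.mpr h
  have hre_le : ∀ z : ℂ, z.re ^ 2 ≤ ‖z‖ ^ 2 := by
    intro z
    have h1 : ‖z‖ ^ 2 = z.re ^ 2 + z.im ^ 2 := by
      rw [Complex.sq_norm, Complex.normSq_apply]
      ring
    nlinarith [sq_nonneg z.im]
  have step1 : (1 : ℝ) ≤ S.card * ∑ a ∈ S, (B a a).re ^ 2 := by
    have h := sq_sum_le_card_mul_sum_sq (s := S) (f := fun a => (B a a).re)
    rw [hdiag] at h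
    simpa using h
  have step2 : ∑ a ∈ S, (B a a).re ^ 2 ≤ ∑ a ∈ S, ‖B a a‖ ^ 2 :=
    Finset.sum_le_sum fun a _ => hre_le (B a a)
  have step3 : ∑ a ∈ S, ‖B a a‖ ^ 2 ≤ ∑ a ∈ S, ∑ b ∈ S, ‖B a b‖ ^ 2 :=
    Finset.sum_le_sum fun a ha =>
      Finset.single_le_sum (f := fun b => ‖B a b‖ ^ 2) (fun b _ => by positivity) ha
  have hchoose_pos : (0 : ℝ) < ((d + t - 1).choose t : ℝ) := by
    have h : 0 < (d + t - 1).choose t := Nat.choose_pos (by omega)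
    exact_mod_cast h
  have hcard_le : (S.card : ℝ) ≤ ((d + t - 1).choose t : ℝ) := by
    exact_mod_cast welch_card_le d t hd
  have hcardR : (0 : ℝ) < (S.card : ℝ) := by exact_mod_cast hcard_pos
  have hfinal : (1 : ℝ) ≤ S.card * ∑ i, ∑ j, w i * w j * ‖(inner ℂ (x i) (x j) : ℂ)‖ ^ (2 * t) := by
    rw [hRHS]
    calc (1 : ℝ) ≤ S.card * ∑ a ∈ S, (B a a).re ^ 2 := step1
      _ ≤ S.card * ∑ a ∈ S, ∑ b ∈ S, ‖B a b‖ ^ 2 := by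
          exact mul_le_mul_of_nonneg_left (le_trans step2 step3) (by positivity)
  calc ((d + t - 1).choose t : ℝ)⁻¹ ≤ ((S.card : ℝ))⁻¹ := inv_anti₀ hcardR hcard_le
    _ ≤ ∑ i, ∑ j, w i * w j * ‖(inner ℂ (x i) (x j) : ℂ)‖ ^ (2 * t) := by
        rw [inv_eq_one_div, div_le_iff₀ hcardR]
        calc (1 : ℝ) ≤ S.card * ∑ i, ∑ j, w i * w j * ‖(inner ℂ (x i) (x j) : ℂ)‖ ^ (2 * t) := hfinal
          _ = (∑ i, ∑ j, w i * w j * ‖(inner ℂ (x i) (x j) : ℂ)‖ ^ (2 * t)) * S.card := by ring
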